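/- Let S = [[A, B],[Bᵗ, C]] be a symmetric (m+n)×(m+n) complex matrix (A of size m×m, C of size n×n) and let K(x, y) = exp{½ (xᵗ, yᵗ) S (x, y)ᵗ} for x ∈ ℝᵐ, y ∈ ℝⁿ. Let α⁺, α⁻ ∈ ℂᵐ and β⁺, β⁻ ∈ ℂⁿ. Then the identity Σ_{j=1}^m (α⁺_j x_j + α⁻_j ∂/∂x_j) K(x,y) = Σ_{k=1}^n (β⁺_k y_k − β⁻_k ∂/∂y_k) K(x,y) holds for all x ∈ ℝᵐ, y ∈ ℝⁿ if and only if α⁺ = −A α⁻ − B β⁻ and β⁺ = Bᵗ α⁻ + C β⁻. -/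

import Mathlib

open Matrix Real
noncomputable section
def cv {ι : Type*} (x : ι → ℝ) : ι → ℂ := fun i => (x i : ℂ)
def qf {m n : ℕ} (S : Matrix (Fin m ⊕ Fin n) (Fin m ⊕ Fin n) ℂ)
    (x : Fin m → ℝ) (y : Fin n → ℝ) : ℂ :=
  dotProduct (cv (Sum.elim x y)) (S.mulVec (cv (Sum.elim x y)))

variable {m n : ℕ}

def Dx (m n : ℕ) : (Fin m ⊕ Fin n) → ((Fin m → ℝ) →L[ℝ] ℂ) :=
  Sum.elim (fun j => Complex.ofRealCLM.comp (ContinuousLinearMap.proj j)) (fun _ => 0)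

lemma hasFDerivAt_coord (y : Fin n → ℝ) (x : Fin m → ℝ) (p : Fin m ⊕ Fin n) :
    HasFDerivAt (fun x' : Fin m → ℝ => cv (Sum.elim x' y) p) (Dx m n p) x := by
  cases p with
  | inl j =>
    exact Complex.ofRealCLM.hasFDerivAt.comp x (hasFDerivAt_apply j x)
  | inr k =>
    simp only [cv, Sum.elim_inr, Dx]
    exact hasFDerivAt_const _ _

lemma qf_eq (S : Matrix (Fin m ⊕ Fin n) (Fin m ⊕ Fin n) ℂ) (x : Fin m → ℝ) (y : Fin n → ℝ) :
    qf S x y = ∑ p, ∑ q, cv (Sum.elim x y) p * (S p q * cv (Sum.elim x y) q) := by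
  simp [qf, dotProduct, mulVec, Finset.mul_sum, mul_add]

lemma hasFDerivAt_qf_x (S : Matrix (Fin m ⊕ Fin n) (Fin m ⊕ Fin n) ℂ)
    (y : Fin n → ℝ) (x : Fin m → ℝ) :
    HasFDerivAt (fun x' => qf S x' y)
      (∑ p, ∑ q, (cv (Sum.elim x y) p • (S p q • Dx m n q)
        + (S p q * cv (Sum.elim x y) q) • Dx m n p)) x := by
  have h : (fun x' => qf S x' y)
      = fun x' => ∑ p, ∑ q, cv (Sum.elim x' y) p * (S p q * cv (Sum.elim x' y) q) :=
    funext fun x' => qf_eq S x' y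
  rw [h]
  apply HasFDerivAt.fun_sum
  intro p _
  apply HasFDerivAt.fun_sum
  intro q _
  exact (hasFDerivAt_coord y x p).mul ((hasFDerivAt_coord y x q).const_mul (S p q))

lemma Dx_apply_single (p : Fin m ⊕ Fin n) (j : Fin m) :
    Dx m n p (Pi.single j 1) = if p = Sum.inl j then 1 else 0 := by
  cases p with
  | inl j' =>
    simp [Dx, Pi.single_apply]
    split <;> simp_all
  | inr k => simp [Dx]

lemma symm_apply {S : Matrix (Fin m ⊕ Fin n) (Fin m ⊕ Fin n) ℂ} (hsymm : Sᵀ = S)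
    (p q : Fin m ⊕ Fin n) : S p q = S q p := by
  conv_lhs => rw [← hsymm]
  rfl

lemma fderivK_x (S : Matrix (Fin m ⊕ Fin n) (Fin m ⊕ Fin n) ℂ) (hsymm : Sᵀ = S)
    (x : Fin m → ℝ) (y : Fin n → ℝ) (j : Fin m) :
    fderiv ℝ (fun x' => Complex.exp ((1 / 2 : ℂ) * qf S x' y)) x (Pi.single j 1)
      = Complex.exp ((1 / 2 : ℂ) * qf S x y)
          * (S.mulVec (cv (Sum.elim x y))) (Sum.inl j) := by
  have h := ((hasFDerivAt_qf_x S y x).const_mul ((1/2 : ℂ))).cexp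
  rw [h.fderiv]
  simp only [ContinuousLinearMap.coe_smul', Pi.smul_apply, ContinuousLinearMap.sum_apply,
    ContinuousLinearMap.add_apply, ContinuousLinearMap.smul_apply, Dx_apply_single,
    smul_eq_mul, mul_ite, mul_one, mul_zero]
  rw [Finset.sum_comm]
  simp [Finset.sum_ite_eq', Finset.sum_add_distrib, mulVec, dotProduct]
  have : ∀ p, cv (Sum.elim x y) p * S p (Sum.inl j) = S (Sum.inl j) p * cv (Sum.elim x y) p := by
    intro p; rw [symm_apply hsymm p (Sum.inl j), mul_comm]
  simp only [this]
  ring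

def Dy (m n : ℕ) : (Fin m ⊕ Fin n) → ((Fin n → ℝ) →L[ℝ] ℂ) :=
  Sum.elim (fun _ => 0) (fun k => Complex.ofRealCLM.comp (ContinuousLinearMap.proj k))

lemma hasFDerivAt_coord_y (x : Fin m → ℝ) (y : Fin n → ℝ) (p : Fin m ⊕ Fin n) :
    HasFDerivAt (fun y' : Fin n → ℝ => cv (Sum.elim x y') p) (Dy m n p) y := by
  cases p with
  | inr k =>
    exact Complex.ofRealCLM.hasFDerivAt.comp y (hasFDerivAt_apply k y)
  | inl j =>
    simp only [cv, Sum.elim_inl, Dy]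
    exact hasFDerivAt_const _ _

lemma hasFDerivAt_qf_y (S : Matrix (Fin m ⊕ Fin n) (Fin m ⊕ Fin n) ℂ)
    (x : Fin m → ℝ) (y : Fin n → ℝ) :
    HasFDerivAt (fun y' => qf S x y')
      (∑ p, ∑ q, (cv (Sum.elim x y) p • (S p q • Dy m n q)
        + (S p q * cv (Sum.elim x y) q) • Dy m n p)) y := by
  have h : (fun y' => qf S x y')
      = fun y' => ∑ p, ∑ q, cv (Sum.elim x y') p * (S p q * cv (Sum.elim x y') q) :=
    funext fun y' => qf_eq S x y'
  rw [h]
  apply HasFDerivAt.fun_sum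
  intro p _
  apply HasFDerivAt.fun_sum
  intro q _
  exact (hasFDerivAt_coord_y x y p).mul ((hasFDerivAt_coord_y x y q).const_mul (S p q))

lemma Dy_apply_single (p : Fin m ⊕ Fin n) (k : Fin n) :
    Dy m n p (Pi.single k 1) = if p = Sum.inr k then 1 else 0 := by
  cases p with
  | inr k' =>
    simp [Dy, Pi.single_apply]
    split <;> simp_all
  | inl j => simp [Dy]

lemma fderivK_y (S : Matrix (Fin m ⊕ Fin n) (Fin m ⊕ Fin n) ℂ) (hsymm : Sᵀ = S)
    (x : Fin m → ℝ) (y : Fin n → ℝ) (k : Fin n) :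
    fderiv ℝ (fun y' => Complex.exp ((1 / 2 : ℂ) * qf S x y')) y (Pi.single k 1)
      = Complex.exp ((1 / 2 : ℂ) * qf S x y)
          * (S.mulVec (cv (Sum.elim x y))) (Sum.inr k) := by
  have h := ((hasFDerivAt_qf_y S x y).const_mul ((1/2 : ℂ))).cexp
  rw [h.fderiv]
  simp only [ContinuousLinearMap.coe_smul', Pi.smul_apply, ContinuousLinearMap.sum_apply,
    ContinuousLinearMap.add_apply, ContinuousLinearMap.smul_apply, Dy_apply_single,
    smul_eq_mul, mul_ite, mul_one, mul_zero]
  rw [Finset.sum_comm]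
  simp [Finset.sum_ite_eq', Finset.sum_add_distrib, mulVec, dotProduct]
  have : ∀ p, cv (Sum.elim x y) p * S p (Sum.inr k) = S (Sum.inr k) p * cv (Sum.elim x y) p := by
    intro p; rw [symm_apply hsymm p (Sum.inr k), mul_comm]
  simp only [this]
  ring

lemma dp_swap {k l : Type*} [Fintype k] [Fintype l] (M : Matrix k l ℂ) (a : l → ℂ) (b : k → ℂ) :
    (M.mulVec a) ⬝ᵥ b = a ⬝ᵥ (Mᵀ.mulVec b) := by
  rw [dotProduct_comm, dotProduct_mulVec, ← Matrix.mulVec_transpose, dotProduct_comm]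

lemma cv_elim (x : Fin m → ℝ) (y : Fin n → ℝ) :
    cv (Sum.elim x y) = Sum.elim (cv x) (cv y) := by
  funext p; cases p <;> rfl

lemma cv_single (j : Fin m) (i : Fin m) :
    cv (Pi.single j 1) i = if i = j then 1 else 0 := by
  simp [cv, Pi.single_apply]
  split <;> simp

lemma cv_zero : cv (0 : Fin m → ℝ) = 0 := by
  funext i; simp [cv]

/-- for `K(x,y) = exp{½ (xᵗ,yᵗ) S (x,y)ᵗ}` with `S = [[A,B],[Bᵗ,C]]`
symmetric, the identity
`Σ_j (α⁺_j x_j + α⁻_j ∂/∂x_j) K = Σ_k (β⁺_k y_k − β⁻_k ∂/∂y_k) K`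
holds for all `x, y` iff `α⁺ = −Aα⁻ − Bβ⁻` and `β⁺ = Bᵗα⁻ + Cβ⁻`. -/
theorem gauss_kernel_diff_eq_iff (m n : ℕ)
    (A : Matrix (Fin m) (Fin m) ℂ) (B : Matrix (Fin m) (Fin n) ℂ)
    (C : Matrix (Fin n) (Fin n) ℂ)
    (hA : Aᵀ = A) (hC : Cᵀ = C)
    (S : Matrix (Fin m ⊕ Fin n) (Fin m ⊕ Fin n) ℂ)
    (hS : S = Matrix.fromBlocks A B Bᵀ C)
    (αp αm : Fin m → ℂ) (βp βm : Fin n → ℂ) :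
    (∀ (x : Fin m → ℝ) (y : Fin n → ℝ),
      (∑ j, (αp j * (x j : ℂ) * Complex.exp ((1 / 2 : ℂ) * qf S x y)
        + αm j * fderiv ℝ (fun x' => Complex.exp ((1 / 2 : ℂ) * qf S x' y)) x
            (Pi.single j 1)))
      = ∑ k, (βp k * (y k : ℂ) * Complex.exp ((1 / 2 : ℂ) * qf S x y)
        - βm k * fderiv ℝ (fun y' => Complex.exp ((1 / 2 : ℂ) * qf S x y')) y
            (Pi.single k 1)))
    ↔ (αp = -(A.mulVec αm) - B.mulVec βm ∧ βp = Bᵀ.mulVec αm + C.mulVec βm) := by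
  have hsymm : Sᵀ = S := by
    rw [hS, Matrix.fromBlocks_transpose, Matrix.transpose_transpose, hA, hC]
  have hmv : ∀ (x : Fin m → ℝ) (y : Fin n → ℝ),
      S.mulVec (cv (Sum.elim x y))
        = Sum.elim (A.mulVec (cv x) + B.mulVec (cv y)) (Bᵀ.mulVec (cv x) + C.mulVec (cv y)) := by
    intro x y
    rw [cv_elim, hS, Matrix.fromBlocks_mulVec]
    simp [Sum.elim_comp_inl, Sum.elim_comp_inr]
  have key : (∀ (x : Fin m → ℝ) (y : Fin n → ℝ),
      (∑ j, (αp j * (x j : ℂ) * Complex.exp ((1 / 2 : ℂ) * qf S x y)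
        + αm j * fderiv ℝ (fun x' => Complex.exp ((1 / 2 : ℂ) * qf S x' y)) x
            (Pi.single j 1)))
      = ∑ k, (βp k * (y k : ℂ) * Complex.exp ((1 / 2 : ℂ) * qf S x y)
        - βm k * fderiv ℝ (fun y' => Complex.exp ((1 / 2 : ℂ) * qf S x y')) y
            (Pi.single k 1)))
      ↔ (∀ (x : Fin m → ℝ) (y : Fin n → ℝ),
        (∑ j, (αp j * (x j : ℂ) + αm j * ((A.mulVec (cv x)) j + (B.mulVec (cv y)) j)))
        = ∑ k, (βp k * (y k : ℂ) - βm k * ((Bᵀ.mulVec (cv x)) k + (C.mulVec (cv y)) k))) := by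
    apply forall_congr'; intro x; apply forall_congr'; intro y
    have hE : Complex.exp ((1 / 2 : ℂ) * qf S x y) ≠ 0 := Complex.exp_ne_zero _
    rw [show (∑ j, (αp j * (x j : ℂ) * Complex.exp ((1 / 2 : ℂ) * qf S x y)
        + αm j * fderiv ℝ (fun x' => Complex.exp ((1 / 2 : ℂ) * qf S x' y)) x
            (Pi.single j 1)))
      = (∑ j, (αp j * (x j : ℂ) + αm j * ((A.mulVec (cv x)) j + (B.mulVec (cv y)) j)))
          * Complex.exp ((1 / 2 : ℂ) * qf S x y) from by
        rw [Finset.sum_mul]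
        refine Finset.sum_congr rfl fun j _ => ?_
        rw [fderivK_x S hsymm x y j, hmv x y, Sum.elim_inl, Pi.add_apply]
        ring]
    rw [show (∑ k, (βp k * (y k : ℂ) * Complex.exp ((1 / 2 : ℂ) * qf S x y)
        - βm k * fderiv ℝ (fun y' => Complex.exp ((1 / 2 : ℂ) * qf S x y')) y
            (Pi.single k 1)))
      = (∑ k, (βp k * (y k : ℂ) - βm k * ((Bᵀ.mulVec (cv x)) k + (C.mulVec (cv y)) k)))
          * Complex.exp ((1 / 2 : ℂ) * qf S x y) from by
        rw [Finset.sum_mul]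
        refine Finset.sum_congr rfl fun k _ => ?_
        rw [fderivK_y S hsymm x y k, hmv x y, Sum.elim_inr, Pi.add_apply]
        ring]
    exact mul_left_inj' hE
  rw [key]
  constructor
  · intro H
    have hAe : ∀ i j : Fin m, A i j = A j i := fun i j => by
      conv_lhs => rw [← hA]
      exact Matrix.transpose_apply A i j
    have hCe : ∀ i j : Fin n, C i j = C j i := fun i j => by
      conv_lhs => rw [← hC]
      exact Matrix.transpose_apply C i j
    constructor
    · funext j
      have h := H (Pi.single j 1) 0
      simp only [cv_zero, Matrix.mulVec_zero, Pi.zero_apply, add_zero, zero_add,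
        Complex.ofReal_zero, mul_zero, zero_mul, zero_sub] at h
      simp only [mulVec, dotProduct, cv_single, mul_ite, mul_one, mul_zero,
        Finset.sum_ite_eq', Finset.mem_univ, if_true, Pi.single_apply] at h
      have h1 : ∀ j' : Fin m, (((if j' = j then (1:ℝ) else 0) : ℝ) : ℂ)
          = if j' = j then 1 else 0 := by intro j'; split <;> simp
      simp only [h1, mul_ite, mul_one, mul_zero, Finset.sum_add_distrib,
        Finset.sum_ite_eq', Finset.mem_univ, if_true] at h
      simp only [Pi.sub_apply, Pi.neg_apply, mulVec, dotProduct]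
      rw [show ∑ i, A j i * αm i = ∑ i, αm i * A i j from
        Finset.sum_congr rfl fun i _ => by rw [hAe j i, mul_comm]]
      rw [show ∑ i, B j i * βm i = ∑ i, βm i * Bᵀ i j from
        Finset.sum_congr rfl fun i _ => by rw [Matrix.transpose_apply, mul_comm]]
      rw [Finset.sum_neg_distrib] at h
      linear_combination h
    · funext k
      have h := H 0 (Pi.single k 1)
      simp only [cv_zero, Matrix.mulVec_zero, Pi.zero_apply, add_zero, zero_add,
        Complex.ofReal_zero, mul_zero, zero_mul, zero_sub] at h
      simp only [mulVec, dotProduct, cv_single, mul_ite, mul_one, mul_zero,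
        Finset.sum_ite_eq', Finset.mem_univ, if_true] at h
      have h1 : ∀ k' : Fin n, (((if k' = k then (1:ℝ) else 0) : ℝ) : ℂ)
          = if k' = k then 1 else 0 := by intro k'; split <;> simp
      simp only [Pi.single_apply, h1, mul_ite, mul_one, mul_zero, Finset.sum_sub_distrib,
        Finset.sum_ite_eq', Finset.mem_univ, if_true] at h
      simp only [Pi.add_apply, mulVec, dotProduct]
      rw [show ∑ i, C k i * βm i = ∑ i, βm i * C i k from
        Finset.sum_congr rfl fun i _ => by rw [hCe k i, mul_comm]]
      rw [show ∑ i, Bᵀ k i * αm i = ∑ i, αm i * B i k from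
        Finset.sum_congr rfl fun i _ => by rw [Matrix.transpose_apply, mul_comm]]
      linear_combination -h
  · rintro ⟨h1, h2⟩ x y
    subst h1 h2
    rw [show (∑ j, ((-(A.mulVec αm) - B.mulVec βm) j * ((x j : ℝ) : ℂ)
          + αm j * ((A.mulVec (cv x)) j + (B.mulVec (cv y)) j)))
        = (-(A.mulVec αm) - B.mulVec βm) ⬝ᵥ cv x
          + αm ⬝ᵥ (A.mulVec (cv x) + B.mulVec (cv y)) from by
      rw [Finset.sum_add_distrib]; rfl]
    rw [show (∑ k, ((Bᵀ.mulVec αm + C.mulVec βm) k * ((y k : ℝ) : ℂ)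
          - βm k * ((Bᵀ.mulVec (cv x)) k + (C.mulVec (cv y)) k)))
        = (Bᵀ.mulVec αm + C.mulVec βm) ⬝ᵥ cv y
          - βm ⬝ᵥ (Bᵀ.mulVec (cv x) + C.mulVec (cv y)) from by
      rw [Finset.sum_sub_distrib]; rfl]
    simp only [sub_dotProduct, add_dotProduct, neg_dotProduct, dotProduct_add, dp_swap,
      Matrix.transpose_transpose, hA, hC]
    ring
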